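/- arXiv:1910.03255 — 3 statements merged into one kernel-verified Lean document; each statement's English description precedes it below -/
import Mathlib

section
/- Let N and m be positive integers with m ≤ N, and let A ∈ ℂ^{m×N} be the partial IDFT matrix. Let i ≥ 1 be an integer with (i+1)N/m ≤ N/2. If the column indices ω_p, ω_q ∈ {1,…,N} satisfy iN/m ≤ |ω_p − ω_q| ≤ (i+1)N/m, then the column correlation satisfies f(ω_p, ω_q) ≤ 1/(m·sin(πi/m)). -/
open Complex Real

lemma norm_exp_mul_I_sub_one' (θ : ℝ) :
    ‖Complex.exp ((θ : ℂ) * Complex.I) - 1‖ = 2 * |Real.sin (θ / 2)| := by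
  have h2 : Real.cos θ = 1 - 2 * Real.sin (θ/2) ^ 2 := by
    have h4 : Real.cos (2 * (θ/2)) = 2 * Real.cos (θ/2)^2 - 1 := Real.cos_two_mul _
    have h3 := Real.sin_sq_add_cos_sq (θ/2)
    rw [show 2 * (θ/2) = θ by ring] at h4
    nlinarith
  have key : ‖Complex.exp ((θ : ℂ) * Complex.I) - 1‖ ^ 2 = (2 * |Real.sin (θ/2)|)^2 := by
    rw [Complex.sq_norm, Complex.normSq_apply]
    simp [Complex.exp_mul_I, Complex.cos_ofReal_re, Complex.sin_ofReal_re]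
    have h3 := Real.sin_sq_add_cos_sq θ
    nlinarith [abs_nonneg (Real.sin (θ/2)), _root_.sq_abs (Real.sin (θ/2))]
  have hnn : 0 ≤ (2:ℝ) * |Real.sin (θ/2)| := by positivity
  nlinarith [norm_nonneg (Complex.exp ((θ : ℂ) * Complex.I) - 1)]


/-- The ω-th column of the partial IDFT matrix `A ∈ ℂ^{m×N}` with entries
`A_{l,ω} = (1/√m)·exp(2πi(l−1)(ω−1)/N)` (here indexed from 0). -/
noncomputable def idftCol (N m : ℕ) (ω : Fin N) : EuclideanSpace ℂ (Fin m) :=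
  WithLp.toLp 2 (fun l => ((1 / Real.sqrt m : ℝ) : ℂ) *
    Complex.exp (2 * Real.pi * Complex.I * ((l : ℕ) : ℂ) * ((ω : ℕ) : ℂ) / (N : ℂ)))

/-- let `i ≥ 1` with `(i+1)N/m ≤ N/2`. If the column indices satisfy
`iN/m ≤ |ω_p − ω_q| ≤ (i+1)N/m`, then the column correlation of the partial IDFT matrix
satisfies `f(ω_p, ω_q) ≤ 1/(m·sin(πi/m))`. -/
theorem column_correlation_bound_far (N m : ℕ) (hN : 0 < N) (hm : 0 < m) (hmN : m ≤ N)
    (i : ℕ) (hi : 1 ≤ i) (hiN : ((i : ℝ) + 1) * N / m ≤ (N : ℝ) / 2)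
    (ωp ωq : Fin N)
    (hlow : (i : ℝ) * N / m ≤ |((ωp : ℕ) : ℝ) - ((ωq : ℕ) : ℝ)|)
    (hhigh : |((ωp : ℕ) : ℝ) - ((ωq : ℕ) : ℝ)| ≤ ((i : ℝ) + 1) * N / m) :
    ‖(inner ℂ (idftCol N m ωp) (idftCol N m ωq) : ℂ)‖ ≤
      1 / (m * Real.sin (Real.pi * i / m)) := by
  have hNr : (0:ℝ) < N := Nat.cast_pos.mpr hN
  have hmr : (0:ℝ) < m := Nat.cast_pos.mpr hm
  have hir : (1:ℝ) ≤ i := by exact_mod_cast hi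
  set d : ℝ := ((ωq:ℕ):ℝ) - ((ωp:ℕ):ℝ) with hd
  have habs_sub : |((ωp : ℕ) : ℝ) - ((ωq : ℕ) : ℝ)| = |d| := abs_sub_comm _ _
  rw [habs_sub] at hlow hhigh
  have hd1 : (i:ℝ) * N / m ≤ |d| := hlow
  have hd2 : |d| ≤ (N:ℝ) / 2 := hhigh.trans hiN
  have hd0 : 0 < |d| := lt_of_lt_of_le (by positivity) hd1
  set θ : ℝ := 2 * Real.pi * (d / N) with hθ
  set z : ℂ := Complex.exp ((θ : ℝ) * Complex.I) with hzdef
  -- inner product formula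
  have hinner : (inner ℂ (idftCol N m ωp) (idftCol N m ωq) : ℂ)
      = ((m:ℂ))⁻¹ * ∑ l ∈ Finset.range m, z ^ l := by
    rw [PiLp.inner_apply, Finset.mul_sum, ← Fin.sum_univ_eq_sum_range]
    congr 1
    funext l
    simp only [idftCol, PiLp.toLp_apply]
    rw [RCLike.inner_apply', map_mul, ← Complex.exp_conj, hzdef, ← Complex.exp_nat_mul]
    rw [Complex.conj_ofReal]
    rw [mul_mul_mul_comm, ← Complex.exp_add, ← Complex.ofReal_mul]
    have hsq : (1 / Real.sqrt m) * (1 / Real.sqrt m) = (m:ℝ)⁻¹ := by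
      rw [div_mul_div_comm, one_mul, Real.mul_self_sqrt (Nat.cast_nonneg m), one_div]
    rw [hsq]
    congr 1
    · push_cast; ring
    · congr 1
      have : (starRingEnd ℂ) (2 * ↑Real.pi * Complex.I * ((l:ℕ) : ℂ) * ((ωp : ℕ) : ℂ) / (N : ℂ))
          = -(2 * ↑Real.pi * Complex.I * ((l:ℕ) : ℂ) * ((ωp : ℕ) : ℂ) / (N : ℂ)) := by
        simp [map_div₀, map_mul, Complex.conj_I, Complex.conj_ofReal, map_ofNat]
        ring
      rw [this, hθ, hd]
      push_cast
      ring
  -- θ facts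
  have hθabs : |θ| = 2 * Real.pi * |d| / N := by
    rw [hθ, abs_mul, abs_div, abs_mul, abs_of_pos Real.pi_pos, abs_of_pos hNr]
    simp [abs_of_pos, mul_div_assoc]
  have hθle : |θ| ≤ Real.pi := by
    rw [hθabs, div_le_iff₀ hNr]
    have h6 : Real.pi * |d| ≤ Real.pi * ((N:ℝ)/2) := mul_le_mul_of_nonneg_left hd2 Real.pi_pos.le
    linarith
  have hθ0 : θ ≠ 0 := by
    intro h
    rw [h, abs_zero] at hθabs
    have : 0 < 2 * Real.pi * |d| / N := by positivity
    linarith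
  -- z ≠ 1
  have hz1 : z ≠ 1 := by
    intro h
    rw [hzdef, Complex.exp_eq_one_iff] at h
    obtain ⟨n, hn⟩ := h
    have hIne : (Complex.I : ℂ) ≠ 0 := Complex.I_ne_zero
    have hn' : (θ : ℂ) = (n : ℂ) * (2 * Real.pi) := by
      have : (θ : ℂ) * Complex.I = ((n:ℂ) * (2 * Real.pi)) * Complex.I := by
        rw [hn]; ring
      exact mul_right_cancel₀ hIne this
    have hre : θ = (n : ℝ) * (2 * Real.pi) := by
      exact_mod_cast hn'
    rcases eq_or_ne n 0 with h0 | h0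
    · rw [h0] at hre; simp at hre; exact hθ0 hre
    · have h1 : (1:ℝ) ≤ |(n:ℝ)| := by exact_mod_cast Int.one_le_abs h0
      have : |θ| = |(n:ℝ)| * (2 * Real.pi) := by
        rw [hre, abs_mul, abs_of_pos (by positivity : (0:ℝ) < 2 * Real.pi)]
      have h7 := mul_le_mul_of_nonneg_right h1 (by positivity : (0:ℝ) ≤ 2 * Real.pi)
      rw [one_mul] at h7
      linarith [Real.pi_pos, hθle]
  -- norm of z - 1
  have hsin_eq : |Real.sin (θ / 2)| = Real.sin (Real.pi * |d| / N) := by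
    have hθ2 : θ / 2 = Real.pi * d / N := by rw [hθ]; ring
    have hb1 : Real.pi * |d| / N ≤ Real.pi := by
      rw [div_le_iff₀ hNr]
      have h6 : Real.pi * |d| ≤ Real.pi * ((N:ℝ)/2) := mul_le_mul_of_nonneg_left hd2 Real.pi_pos.le
      nlinarith [Real.pi_pos, hNr]
    have hb0 : 0 ≤ Real.pi * |d| / N := by positivity
    rw [hθ2]
    rcases abs_cases d with ⟨h, _⟩ | ⟨h, _⟩
    · rw [h] at hb1 hb0 ⊢
      exact abs_of_nonneg (Real.sin_nonneg_of_nonneg_of_le_pi hb0 hb1)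
    · have : Real.pi * |d| / N = -(Real.pi * d / N) := by rw [h]; ring
      rw [this, Real.sin_neg]
      rw [this] at hb1 hb0
      have := Real.sin_nonneg_of_nonneg_of_le_pi hb0 hb1
      rw [Real.sin_neg] at this
      rw [abs_of_nonpos (by linarith)]
  have hnorm_z1 : ‖z - 1‖ = 2 * Real.sin (Real.pi * |d| / N) := by
    rw [hzdef, norm_exp_mul_I_sub_one', hsin_eq]
  -- sine bounds
  have ha_le_b : Real.pi * i / m ≤ Real.pi * |d| / N := by
    rw [div_le_div_iff₀ hmr hNr]
    have h5 : (i:ℝ) * N ≤ |d| * m := by rwa [div_le_iff₀ hmr] at hd1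
    have h6 := mul_le_mul_of_nonneg_left h5 Real.pi_pos.le
    linarith
  have hb_le : Real.pi * |d| / N ≤ Real.pi / 2 := by
    rw [div_le_div_iff₀ hNr (by norm_num : (0:ℝ) < 2)]
    have h6 : Real.pi * |d| ≤ Real.pi * ((N:ℝ)/2) := mul_le_mul_of_nonneg_left hd2 Real.pi_pos.le
    linarith
  have ha_pos : 0 < Real.pi * i / m := by positivity
  have hsina_pos : 0 < Real.sin (Real.pi * i / m) :=
    Real.sin_pos_of_pos_of_lt_pi ha_pos (by linarith [Real.pi_pos, ha_le_b, hb_le])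
  have hsin_mono : Real.sin (Real.pi * i / m) ≤ Real.sin (Real.pi * |d| / N) := by
    have hb0 : (0:ℝ) ≤ Real.pi * |d| / N := by positivity
    exact Real.strictMonoOn_sin.monotoneOn
      ⟨by linarith [Real.pi_pos], by linarith⟩
      ⟨by linarith [Real.pi_pos], by linarith⟩ ha_le_b
  have hsinb_pos : 0 < Real.sin (Real.pi * |d| / N) := lt_of_lt_of_le hsina_pos hsin_mono
  -- main estimate
  rw [hinner, norm_mul, geom_sum_eq hz1, norm_div, norm_inv, Complex.norm_natCast]
  have hzm : ‖z ^ m - 1‖ ≤ 2 := by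
    have : ‖z‖ = 1 := by
      rw [hzdef, Complex.norm_exp]
      simp
    calc ‖z ^ m - 1‖ ≤ ‖z ^ m‖ + ‖(1:ℂ)‖ := norm_sub_le _ _
      _ = 1 + 1 := by rw [norm_pow, this, one_pow, norm_one]
      _ = 2 := by norm_num
  calc (m:ℝ)⁻¹ * (‖z ^ m - 1‖ / ‖z - 1‖)
      ≤ (m:ℝ)⁻¹ * (2 / (2 * Real.sin (Real.pi * |d| / N))) := by
        apply mul_le_mul_of_nonneg_left _ (by positivity)
        rw [hnorm_z1]
        have hden : (0:ℝ) < 2 * Real.sin (Real.pi * |d| / N) := by linarith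
        exact div_le_div_of_nonneg_right hzm (le_of_lt hden)
    _ = 1 / (m * Real.sin (Real.pi * |d| / N)) := by
        field_simp
    _ ≤ 1 / (m * Real.sin (Real.pi * i / m)) := by
        apply one_div_le_one_div_of_le (by positivity)
        exact mul_le_mul_of_nonneg_left hsin_mono (le_of_lt hmr)
end

section
/- (Deterministic success of the first CAST decoding iteration.) Let N and m be positive integers with m dividing N and 2m ≤ N, and let A ∈ ℂ^{m×N} be the partial IDFT matrix. Fix ω₀ ∈ {1,…,N/m} and let Γ = {ω₀ + cN/m : c = 0,1,…,m−1}. Let Ω ⊆ Γ with |Ω| = k, let x : Ω → ℂ, let ṽ ∈ ℂ^m, and set ỹ = Σ_{ω∈Ω} x_ω·a_ω + ṽ. Let ρ̄ = k/(m·sin(π/(2m))) and suppose ρ̄ < 1 and ‖ṽ‖₂ < ((1−ρ̄)/2)·max_{ω∈Ω}|x_ω|. Then every index ω* ∈ {1,…,N} maximizing ω ↦ |⟨a_ω, ỹ⟩| satisfies dist_N(ω*, ω) < N/(2m) for some ω ∈ Ω, where dist_N(p,q) = min(|p−q|, N−|p−q|) is the cyclic distance; that is, the index chosen in the first iteration is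 τ-close to a true support element with τ = N/(2m). -/
open Complex Real

/-- The cyclic distance `dist_N(p,q) = min(|p−q|, N−|p−q|)` between two indices,
as a real number. -/
noncomputable def cyclicDist (N : ℕ) (p q : Fin N) : ℝ :=
  min |((p : ℕ) : ℝ) - ((q : ℕ) : ℝ)| ((N : ℝ) - |((p : ℕ) : ℝ) - ((q : ℕ) : ℝ)|)

lemma inner_idft (N m : ℕ) (ω ω' : Fin N) :
    (inner ℂ (idftCol N m ω) (idftCol N m ω') : ℂ)
      = (m : ℂ)⁻¹ * ∑ l : Fin m,
          Complex.exp (2 * Real.pi * Complex.I *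
            ((((ω':ℕ):ℤ) - (((ω:Fin N):ℕ):ℤ) : ℤ) : ℂ) / (N:ℂ)) ^ (l:ℕ) := by
  rw [PiLp.inner_apply, Finset.mul_sum]
  refine Finset.sum_congr rfl fun l _ => ?_
  rw [RCLike.inner_apply]
  have hconj : (starRingEnd ℂ) (idftCol N m ω l)
      = ((1 / Real.sqrt m : ℝ) : ℂ) *
        Complex.exp (-(2 * Real.pi * Complex.I * ((l:ℕ):ℂ) * ((ω:ℕ):ℂ) / (N:ℂ))) := by
    simp only [idftCol, map_mul, Complex.conj_ofReal, ← Complex.exp_conj]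
    congr 2
    simp only [map_div₀, map_mul, Complex.conj_I, Complex.conj_ofReal, map_ofNat, map_natCast]
    ring
  rw [hconj]
  show _ = (m:ℂ)⁻¹ * _
  rw [idftCol, mul_comm _ (((1 / Real.sqrt m : ℝ) : ℂ) * _)]
  have hs : ((1 / Real.sqrt m : ℝ) : ℂ) * ((1 / Real.sqrt m : ℝ) : ℂ) = (m:ℂ)⁻¹ := by
    rw [← Complex.ofReal_mul,
      show (1 / Real.sqrt m) * (1 / Real.sqrt m) = 1 / (Real.sqrt m * Real.sqrt m) by ring,
      Real.mul_self_sqrt (Nat.cast_nonneg m)]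
    simp
  have hexp : Complex.exp (-(2 * Real.pi * Complex.I * ((l:ℕ):ℂ) * ((ω:ℕ):ℂ) / (N:ℂ))) *
      Complex.exp (2 * Real.pi * Complex.I * ((l:ℕ):ℂ) * ((ω':ℕ):ℂ) / (N:ℂ))
      = Complex.exp (2 * Real.pi * Complex.I *
          (((((ω'):ℕ):ℤ) - (((ω):ℕ):ℤ) : ℤ) : ℂ) / (N:ℂ)) ^ (l:ℕ) := by
    rw [← Complex.exp_nat_mul, ← Complex.exp_add]
    congr 1
    push_cast
    ring
  calc ((1 / Real.sqrt m : ℝ) : ℂ) * Complex.exp (-(2 * Real.pi * Complex.I * ((l:ℕ):ℂ) * ((ω:ℕ):ℂ) / (N:ℂ)))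
        * (((1 / Real.sqrt m : ℝ) : ℂ) * Complex.exp (2 * Real.pi * Complex.I * ((l:ℕ):ℂ) * ((ω':ℕ):ℂ) / (N:ℂ)))
      = (((1 / Real.sqrt m : ℝ) : ℂ) * ((1 / Real.sqrt m : ℝ) : ℂ)) *
        (Complex.exp (-(2 * Real.pi * Complex.I * ((l:ℕ):ℂ) * ((ω:ℕ):ℂ) / (N:ℂ))) *
         Complex.exp (2 * Real.pi * Complex.I * ((l:ℕ):ℂ) * ((ω':ℕ):ℂ) / (N:ℂ))) := by ring
    _ = _ := by rw [hs, hexp]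

lemma inner_idft_self (N m : ℕ) (hm : 0 < m) (ω : Fin N) :
    (inner ℂ (idftCol N m ω) (idftCol N m ω) : ℂ) = 1 := by
  rw [inner_idft]
  simp [Complex.exp_zero, inv_mul_cancel₀ (show (m:ℂ) ≠ 0 by exact_mod_cast hm.ne')]

lemma norm_idft (N m : ℕ) (hm : 0 < m) (ω : Fin N) : ‖idftCol N m ω‖ = 1 := by
  rw [@norm_eq_sqrt_re_inner ℂ, inner_idft_self N m hm ω]
  simp

lemma abs_exp_mul_I_sub_one (x : ℝ) :
    ‖Complex.exp (x*Complex.I) - 1‖ = 2*|Real.sin (x/2)| := by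
  rw [Complex.norm_def, Complex.normSq_apply]
  simp only [Complex.sub_re, Complex.sub_im, Complex.one_re, Complex.one_im,
    Complex.exp_ofReal_mul_I_re, Complex.exp_ofReal_mul_I_im]
  rw [Real.abs_sin_half]
  have h : (Real.cos x - 1) * (Real.cos x - 1) + (Real.sin x - 0) * (Real.sin x - 0)
      = 4 * ((1 - Real.cos x)/2) := by
    nlinarith [Real.sin_sq_add_cos_sq x]
  rw [h, show (4:ℝ) * ((1 - Real.cos x)/2) = 2^2 * ((1 - Real.cos x)/2) by norm_num,
    Real.sqrt_mul (by positivity), Real.sqrt_sq (by norm_num)]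

lemma geom_abs_le (m : ℕ) (z : ℂ) (hz : ‖z - 1‖ ≠ 0) (h1 : ‖z‖ = 1) :
    ‖∑ l : Fin m, z ^ (l:ℕ)‖ ≤ 2 / ‖z - 1‖ := by
  rw [le_div_iff₀ (lt_of_le_of_ne (by positivity) (Ne.symm hz))]
  calc ‖∑ l : Fin m, z ^ (l:ℕ)‖ * ‖z - 1‖
      = ‖(∑ i ∈ Finset.range m, z ^ i) * (z - 1)‖ := by
        rw [norm_mul, Fin.sum_univ_eq_sum_range]
    _ = ‖z ^ m - 1‖ := by rw [geom_sum_mul]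
    _ ≤ ‖z ^ m‖ + 1 := by
        simpa using norm_sub_le (z ^ m) 1
    _ ≤ 2 := by rw [norm_pow, h1]; norm_num

lemma myGeomSumZero (m : ℕ) (hm : 0 < m) (e : ℤ) (he : e ≠ 0) (habs : e.natAbs < m) :
    ∑ l : Fin m, Complex.exp (2 * Real.pi * Complex.I * (e:ℂ) / (m:ℂ)) ^ (l:ℕ) = 0 := by
  set z := Complex.exp (2 * Real.pi * Complex.I * (e:ℂ) / (m:ℂ)) with hz
  have hm0 : (m:ℂ) ≠ 0 := by exact_mod_cast hm.ne'
  have hzm : z ^ m = 1 := by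
    rw [hz, ← Complex.exp_nat_mul,
      show (m:ℂ) * (2 * Real.pi * Complex.I * (e:ℂ) / (m:ℂ)) = (e:ℂ) * (2 * Real.pi * Complex.I) by
        field_simp]
    exact Complex.exp_int_mul_two_pi_mul_I e
  have hz1 : z ≠ 1 := by
    intro h
    rw [hz, Complex.exp_eq_one_iff] at h
    obtain ⟨n, hn⟩ := h
    have h2 : (2*(Real.pi:ℂ)*Complex.I) * (e:ℂ) = (2*(Real.pi:ℂ)*Complex.I) * ((n:ℂ)*(m:ℂ)) := by
      field_simp at hn
      linear_combination (2*(Real.pi:ℂ)*Complex.I) * hn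
    have hpi : (2*(Real.pi:ℂ)*Complex.I) ≠ 0 := by
      simp [Complex.I_ne_zero, Real.pi_ne_zero, Complex.ofReal_ne_zero]
    have h3 : (e:ℂ) = ((n*m : ℤ):ℂ) := by push_cast; exact mul_left_cancel₀ hpi h2
    have h4 : e = n*m := by exact_mod_cast h3
    have hn0 : n ≠ 0 := by rintro rfl; simp at h4; exact he h4
    have hme : (m:ℤ) ≤ |e| := by
      calc (m:ℤ) = 1 * m := (one_mul _).symm
        _ ≤ |n| * m := by
            exact mul_le_mul_of_nonneg_right (Int.one_le_abs hn0) (by positivity)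
        _ = |n * m| := by rw [abs_mul, abs_of_nonneg (show (0:ℤ) ≤ m by positivity)]
        _ = |e| := by rw [h4]
    have : (m:ℤ) ≤ e.natAbs := by rwa [Int.abs_eq_natAbs] at hme
    omega
  rw [Fin.sum_univ_eq_sum_range (fun i => z ^ i), geom_sum_eq hz1, hzm]
  simp

lemma far_bound (N m : ℕ) (hN : 0 < N) (hm : 0 < m) (ω ω' : Fin N)
    (hfar : (N:ℝ)/(2*m) ≤ cyclicDist N ω ω') :
    ‖(inner ℂ (idftCol N m ω) (idftCol N m ω') : ℂ)‖ ≤ 1/(m * Real.sin (Real.pi/(2*m))) := by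
  have hNr : (0:ℝ) < N := by exact_mod_cast hN
  have hmr : (0:ℝ) < m := by exact_mod_cast hm
  have hsin : 0 < Real.sin (Real.pi/(2*m)) := by
    apply Real.sin_pos_of_pos_of_lt_pi
    · positivity
    · rw [div_lt_iff₀ (by positivity)]
      nlinarith [Real.pi_pos, (show (1:ℝ) ≤ m by exact_mod_cast hm)]
  set δ : ℤ := ((ω':ℕ):ℤ) - ((ω:ℕ):ℤ) with hδ
  set θ : ℝ := 2*Real.pi*(δ:ℝ)/N with hθ
  have harg : 2*Real.pi*Complex.I*(δ:ℂ)/(N:ℂ) = ((θ:ℝ):ℂ)*Complex.I := by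
    rw [hθ]; push_cast; ring
  set a : ℝ := |((δ:ℤ):ℝ)| with ha
  have hcd : cyclicDist N ω ω' = min a ((N:ℝ) - a) := by
    rw [cyclicDist, ha, hδ]
    push_cast
    rw [abs_sub_comm]
  have haN : a < N := by
    rw [ha, hδ]
    push_cast
    rw [abs_sub_lt_iff]
    have h1 : ((ω':ℕ):ℝ) < N := by exact_mod_cast ω'.isLt
    have h2 : ((ω:ℕ):ℝ) < N := by exact_mod_cast ω.isLt
    have h3 : (0:ℝ) ≤ ((ω':ℕ):ℝ) := by positivity
    have h4 : (0:ℝ) ≤ ((ω:ℕ):ℝ) := by positivity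
    constructor <;> linarith
  have ha0 : 0 ≤ a := abs_nonneg _
  set b : ℝ := min a ((N:ℝ) - a) with hb
  have hbfar : (N:ℝ)/(2*m) ≤ b := by rw [hcd] at hfar; exact hfar
  have hbhalf : b ≤ (N:ℝ)/2 := by
    rw [hb]
    rcases le_total a ((N:ℝ)-a) with h|h
    · rw [min_eq_left h]; linarith
    · rw [min_eq_right h]; linarith
  have hθ2 : θ/2 = Real.pi*(δ:ℝ)/N := by rw [hθ]; ring
  have hsa : |Real.sin (θ/2)| = Real.sin (Real.pi*a/N) := by
    rcases le_or_gt 0 ((δ:ℝ)) with h|h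
    · rw [hθ2, show a = ((δ:ℤ):ℝ) from _root_.abs_of_nonneg h]
      apply _root_.abs_of_nonneg
      apply Real.sin_nonneg_of_nonneg_of_le_pi
      · positivity
      · rw [div_le_iff₀ hNr]
        have hδN : ((δ:ℤ):ℝ) < N := by
          rw [← _root_.abs_of_nonneg h, ← ha]; exact haN
        nlinarith [Real.pi_pos, hδN, h]
    · have haneg : a = -((δ:ℤ):ℝ) := abs_of_neg h
      rw [hθ2, show Real.pi*((δ:ℤ):ℝ)/N = -(Real.pi*a/N) by rw [haneg]; ring,
        Real.sin_neg, abs_neg]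
      apply _root_.abs_of_nonneg
      apply Real.sin_nonneg_of_nonneg_of_le_pi
      · positivity
      · rw [div_le_iff₀ hNr]
        nlinarith [Real.pi_pos, haN]
  have hsb : Real.sin (Real.pi*a/N) = Real.sin (Real.pi*b/N) := by
    rw [hb]
    rcases min_cases a ((N:ℝ)-a) with ⟨h,_⟩|⟨h,_⟩
    · rw [h]
    · rw [h, show Real.pi*((N:ℝ)-a)/N = Real.pi - Real.pi*a/N by field_simp,
        Real.sin_pi_sub]
  have hmono : Real.sin (Real.pi/(2*m)) ≤ Real.sin (Real.pi*b/N) := by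
    apply Real.sin_le_sin_of_le_of_le_pi_div_two
    · have : (0:ℝ) < Real.pi/(2*m) := by positivity
      linarith [Real.pi_pos]
    · rw [div_le_div_iff₀ hNr (by norm_num : (0:ℝ) < 2)]
      nlinarith [Real.pi_pos]
    · rw [div_le_div_iff₀ (by positivity : (0:ℝ) < 2*m) hNr]
      have hNle : (N:ℝ) ≤ 2*m*b := by
        rw [div_le_iff₀ (by positivity : (0:ℝ) < 2*m)] at hbfar
        linarith
      nlinarith [Real.pi_pos]
  have hkey : Real.sin (Real.pi/(2*m)) ≤ |Real.sin (θ/2)| := by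
    rw [hsa, hsb]
    exact hmono
  set z : ℂ := Complex.exp (((θ:ℝ):ℂ)*Complex.I) with hz
  have habsz : ‖z‖ = 1 := Complex.norm_exp_ofReal_mul_I θ
  have habsz1 : ‖z - 1‖ = 2*|Real.sin (θ/2)| := abs_exp_mul_I_sub_one θ
  have habsz1pos : 0 < ‖z - 1‖ := by rw [habsz1]; nlinarith
  have hgeo := geom_abs_le m z habsz1pos.ne' habsz
  rw [inner_idft]
  rw [show (((((ω':Fin N):ℕ):ℤ) - (((ω:Fin N):ℕ):ℤ) : ℤ) : ℂ) = (δ:ℂ) by rw [hδ]]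
  rw [harg, ← hz]
  rw [norm_mul, norm_inv, Complex.norm_natCast]
  have h2 : ‖∑ l : Fin m, z ^ (l:ℕ)‖ ≤ 1/Real.sin (Real.pi/(2*m)) := by
    rw [habsz1] at hgeo
    refine hgeo.trans ?_
    have hpos2 : (0:ℝ) < 2*|Real.sin (θ/2)| := by rw [habsz1] at habsz1pos; exact habsz1pos
    rw [div_le_div_iff₀ hpos2 hsin]
    nlinarith [hkey, abs_nonneg (Real.sin (θ/2))]
  calc (m:ℝ)⁻¹ * ‖∑ l : Fin m, z ^ (l:ℕ)‖
      ≤ (m:ℝ)⁻¹ * (1/Real.sin (Real.pi/(2*m))) := by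
        apply mul_le_mul_of_nonneg_left h2 (by positivity)
    _ = 1/(m * Real.sin (Real.pi/(2*m))) := by field_simp

lemma gamma_ortho (N m : ℕ) (hm : 0 < m) (hdvd : m ∣ N) (hnm : 0 < N/m)
    (ω₀ : ℕ) (g : Fin m → Fin N) (hg : ∀ c : Fin m, (g c : ℕ) = ω₀ + (c:ℕ)*(N/m))
    (c c' : Fin m) (hne : g c ≠ g c') :
    (inner ℂ (idftCol N m (g c)) (idftCol N m (g c')) : ℂ) = 0 := by
  rw [inner_idft]
  set e : ℤ := ((c':ℕ):ℤ) - ((c:ℕ):ℤ) with he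
  have hδ : (((g c':Fin N):ℕ):ℤ) - (((g c:Fin N):ℕ):ℤ) = e * ((N/m : ℕ):ℤ) := by
    rw [hg, hg, he]; push_cast; ring
  have hcc : c ≠ c' := fun h => hne (by rw [h])
  have he0 : e ≠ 0 := by
    rw [he]
    intro h
    apply hcc
    have : ((c:ℕ):ℤ) = ((c':ℕ):ℤ) := by omega
    have : (c:ℕ) = (c':ℕ) := by exact_mod_cast this
    exact Fin.ext this
  have habs : e.natAbs < m := by
    rw [he]
    have := c.isLt
    have := c'.isLt
    omega
  have hm0 : (m:ℂ) ≠ 0 := by exact_mod_cast hm.ne'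
  have hnm0 : ((N/m : ℕ):ℂ) ≠ 0 := by exact_mod_cast hnm.ne'
  have hNeq : (N:ℂ) = (m:ℂ) * ((N/m : ℕ):ℂ) := by
    have : m * (N/m) = N := Nat.mul_div_cancel' hdvd
    exact_mod_cast this.symm
  have hN0 : (N:ℂ) ≠ 0 := by rw [hNeq]; exact mul_ne_zero hm0 hnm0
  have harg : 2*(Real.pi:ℂ)*Complex.I*(((((g c':Fin N):ℕ):ℤ) - (((g c:Fin N):ℕ):ℤ) : ℤ):ℂ)/(N:ℂ)
      = 2*(Real.pi:ℂ)*Complex.I*(e:ℂ)/(m:ℂ) := by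
    rw [show (((((g c':Fin N):ℕ):ℤ) - (((g c:Fin N):ℕ):ℤ) : ℤ):ℂ) = (e:ℂ) * (((N/m : ℕ):ℤ):ℂ) by
      exact_mod_cast congrArg Int.cast hδ]
    rw [div_eq_div_iff hN0 hm0, hNeq, Int.cast_natCast]
    ring
  rw [harg, myGeomSumZero m hm e he0 habs, mul_zero]

/-- deterministic success of the first CAST decoding iteration:
with `m ∣ N`, `2m ≤ N`, support `Ω ⊆ Γ = {ω₀ + cN/m : c = 0,…,m−1}` of size `k`,
`ỹ = Σ_{ω∈Ω} x_ω a_ω + ṽ`, `ρ̄ = k/(m·sin(π/(2m))) < 1`, and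
`‖ṽ‖₂ < ((1−ρ̄)/2)·max_{ω∈Ω}|x_ω|`, every maximizer `ω*` of `ω ↦ |⟨a_ω, ỹ⟩|` satisfies
`dist_N(ω*, ω) < N/(2m)` for some `ω ∈ Ω`. -/
theorem cast_first_iteration_success (N m k : ℕ) (hN : 0 < N) (hm : 0 < m)
    (hdvd : m ∣ N) (h2m : 2 * m ≤ N)
    (ω₀ : ℕ) (hω₀ : ω₀ < N / m)
    (g : Fin m → Fin N) (hg : ∀ c : Fin m, (g c : ℕ) = ω₀ + (c : ℕ) * (N / m))
    (Ω : Finset (Fin N)) (hΩsub : Ω ⊆ Finset.image g Finset.univ)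
    (hΩ : Ω.Nonempty) (hk : Ω.card = k)
    (x : Fin N → ℂ) (v y : EuclideanSpace ℂ (Fin m))
    (hy : y = (∑ ω ∈ Ω, x ω • idftCol N m ω) + v)
    (hρ : (k : ℝ) / (m * Real.sin (Real.pi / (2 * m))) < 1)
    (hv : ‖v‖ < ((1 - (k : ℝ) / (m * Real.sin (Real.pi / (2 * m)))) / 2) *
      (Ω.sup' hΩ fun ω => ‖x ω‖))
    (ωs : Fin N)
    (hmax : ∀ ω : Fin N, ‖(inner ℂ (idftCol N m ω) y : ℂ)‖ ≤ ‖(inner ℂ (idftCol N m ωs) y : ℂ)‖) :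
    ∃ ω ∈ Ω, cyclicDist N ωs ω < (N : ℝ) / (2 * m) := by
  by_contra hcon
  push_neg at hcon
  have hnm : 0 < N/m := by omega
  set s : ℝ := Real.sin (Real.pi/(2*m)) with hsdef
  set ρ : ℝ := (k:ℝ)/(m*s) with hρdef
  set X : ℝ := Ω.sup' hΩ fun ω => ‖x ω‖ with hXdef
  have hmr : (0:ℝ) < m := by exact_mod_cast hm
  have hsin : 0 < s := by
    rw [hsdef]
    apply Real.sin_pos_of_pos_of_lt_pi
    · positivity
    · rw [div_lt_iff₀ (by positivity)]
      nlinarith [Real.pi_pos, (show (1:ℝ) ≤ m by exact_mod_cast hm)]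
  -- orthonormality on Γ
  have hortho : ∀ ω ∈ Finset.image g Finset.univ, ∀ ω' ∈ Finset.image g Finset.univ, ω ≠ ω' →
      (inner ℂ (idftCol N m ω) (idftCol N m ω') : ℂ) = 0 := by
    intro ω hω ω' hω' hne
    obtain ⟨c, -, rfl⟩ := Finset.mem_image.1 hω
    obtain ⟨c', -, rfl⟩ := Finset.mem_image.1 hω'
    exact gamma_ortho N m hm hdvd hnm ω₀ g hg c c' hne
  have hinner_y : ∀ ω ∈ Ω, (inner ℂ (idftCol N m ω) y : ℂ)
      = x ω + (inner ℂ (idftCol N m ω) v : ℂ) := by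
    intro ω hω
    rw [hy, inner_add_right, inner_sum]
    congr 1
    simp_rw [inner_smul_right]
    rw [Finset.sum_eq_single ω (fun ω' h' hne =>
      by rw [hortho ω (hΩsub hω) ω' (hΩsub h') (Ne.symm hne), mul_zero])
      (fun h => absurd hω h)]
    rw [inner_idft_self N m hm ω, mul_one]
  -- lower bound at the max-coefficient index
  obtain ⟨ωm, hωm, hXeq0⟩ := Finset.exists_mem_eq_sup' hΩ fun ω => ‖x ω‖
  have hXeq : X = ‖x ωm‖ := by rw [hXdef]; exact hXeq0
  have hlow : X - ‖v‖ ≤ ‖(inner ℂ (idftCol N m ωm) y : ℂ)‖ := by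
    rw [hinner_y ωm hωm]
    have h1 : ‖(inner ℂ (idftCol N m ωm) v : ℂ)‖ ≤ ‖v‖ := by
      have := norm_inner_le_norm (𝕜 := ℂ) (idftCol N m ωm) v
      rwa [norm_idft N m hm ωm, one_mul] at this
    have h2 : ‖x ωm‖ ≤ ‖x ωm + (inner ℂ (idftCol N m ωm) v : ℂ)‖
        + ‖(inner ℂ (idftCol N m ωm) v : ℂ)‖ := by
      calc ‖x ωm‖ = ‖(x ωm + (inner ℂ (idftCol N m ωm) v : ℂ))
            + (-(inner ℂ (idftCol N m ωm) v : ℂ))‖ := by ring_nf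
        _ ≤ _ := by
            refine (norm_add_le _ _).trans ?_
            rw [norm_neg]
      -- done
    have hXle : X = ‖x ωm‖ := hXeq
    linarith
  -- upper bound at ωs
  have hub : ‖(inner ℂ (idftCol N m ωs) y : ℂ)‖ ≤ ρ * X + ‖v‖ := by
    rw [hy, inner_add_right]
    refine (norm_add_le _ _).trans ?_
    have hv' : ‖(inner ℂ (idftCol N m ωs) v : ℂ)‖ ≤ ‖v‖ := by
      have := norm_inner_le_norm (𝕜 := ℂ) (idftCol N m ωs) v
      rwa [norm_idft N m hm ωs, one_mul] at this
    have hsum : ‖(inner ℂ (idftCol N m ωs) (∑ ω ∈ Ω, x ω • idftCol N m ω) : ℂ)‖ ≤ ρ * X := by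
      rw [inner_sum]
      refine (norm_sum_le _ _).trans ?_
      have hXnn : 0 ≤ X := by rw [hXeq]; exact norm_nonneg (x ωm)
      have hterm : ∀ ω ∈ Ω, ‖(inner ℂ (idftCol N m ωs) (x ω • idftCol N m ω) : ℂ)‖
          ≤ X * (1/(m*s)) := by
        intro ω hω
        rw [inner_smul_right, norm_mul]
        have h1 : ‖x ω‖ ≤ X := Finset.le_sup' (fun ω => ‖x ω‖) hω
        have h2 : ‖(inner ℂ (idftCol N m ωs) (idftCol N m ω) : ℂ)‖ ≤ 1/(m*s) :=
          far_bound N m hN hm ωs ω (hcon ω hω)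
        exact mul_le_mul h1 h2 (norm_nonneg _) hXnn
      calc ∑ ω ∈ Ω, ‖(inner ℂ (idftCol N m ωs) (x ω • idftCol N m ω) : ℂ)‖
          ≤ ∑ _ω ∈ Ω, X * (1/(m*s)) := Finset.sum_le_sum hterm
        _ = k * (X * (1/(m*s))) := by rw [Finset.sum_const, hk, nsmul_eq_mul]
        _ = ρ * X := by rw [hρdef]; field_simp
    linarith
  -- combine
  have hchain := (hlow.trans (hmax ωm)).trans hub
  have hvX : ‖v‖ < ((1 - ρ)/2) * X := hv
  linarith
end

section
/- (Deterministic success of the second CAST decoding iteration.) Let N and m be positive integers with m dividing N, and let A ∈ ℂ^{m×N} be the partial IDFT matrix. Fix ω₀ ∈ {1,…,N/m} and let Γ = {ω₀ + cN/m : c = 0,1,…,m−1}. Let Ω ⊆ Γ with |Ω| = k, let x : Ω → ℂ, let ṽ ∈ ℂ^m, and set ỹ = Σ_{ω∈Ω} x_ω·a_ω + ṽ. If min_{ω∈Ω}|x_ω| > 2‖ṽ‖₂, then for every ω_i ∈ Ω and every ω_j ∈ Γ∖Ω we have |⟨a_{ω_i}, ỹ⟩| > |⟨a_{ω_j}, ỹ⟩|;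 consequently the k indices of Γ with the largest values of |⟨a_ω, ỹ⟩| are exactly the elements of Ω. -/
open Complex Real

lemma sum_exp_ne (m : ℕ) (hm : 0 < m) (t : ℤ) (ht : ¬ ((m:ℤ) ∣ t)) :
    ∑ l ∈ Finset.range m, Complex.exp (2*Real.pi*Complex.I*t/m)^l = 0 := by
  have hm0 : (m:ℂ) ≠ 0 := by exact_mod_cast hm.ne'
  have hpi : (Real.pi:ℂ) ≠ 0 := by exact_mod_cast Real.pi_ne_zero
  have h2 : ((2:ℂ)*Real.pi*Complex.I) ≠ 0 := by
    simp [Complex.I_ne_zero, hpi]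
  have hne : Complex.exp (2*Real.pi*Complex.I*t/m) ≠ 1 := by
    intro h
    rw [Complex.exp_eq_one_iff] at h
    obtain ⟨n, hn⟩ := h
    apply ht
    refine ⟨n, ?_⟩
    rw [mul_comm]
    have : (t:ℂ) = n * m := by
      field_simp at hn
      have h3 : (2:ℂ)*Real.pi*Complex.I*t = 2*Real.pi*Complex.I*(n*m) := by
        rw [hn]; ring
      exact mul_left_cancel₀ h2 h3
    exact_mod_cast this
  rw [geom_sum_eq hne]
  have hone : Complex.exp (2*Real.pi*Complex.I*t/m) ^ m = 1 := by
    rw [← Complex.exp_nat_mul]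
    rw [show (m:ℂ) * (2*Real.pi*Complex.I*t/m) = t * (2*Real.pi*Complex.I) by field_simp]
    exact_mod_cast Complex.exp_int_mul_two_pi_mul_I t
  rw [hone]
  simp

lemma inner_idft_s8 (N m : ℕ) (hN : 0 < N) (hm : 0 < m) (hdvd : m ∣ N)
    (ω₀ : ℕ) (ωi ωj : Fin N) (ci cj : Fin m)
    (hi : (ωi:ℕ) = ω₀ + ci*(N/m)) (hj : (ωj:ℕ) = ω₀ + cj*(N/m)) :
    (inner ℂ (idftCol N m ωi) (idftCol N m ωj) : ℂ) = if ci = cj then 1 else 0 := by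
  set d : ℕ := N / m with hd
  have hdpos : 0 < d := Nat.div_pos (Nat.le_of_dvd hN hdvd) hm
  have hNmd : N = m * d := (Nat.mul_div_cancel' hdvd).symm
  have hm0 : (m:ℂ) ≠ 0 := by exact_mod_cast hm.ne'
  have hd0 : (d:ℂ) ≠ 0 := by exact_mod_cast hdpos.ne'
  have hN0 : (N:ℂ) ≠ 0 := by exact_mod_cast hN.ne'
  set t : ℤ := (cj:ℤ) - (ci:ℤ) with hts
  have hdiffC : ((ωj:ℕ):ℂ) - ((ωi:ℕ):ℂ) = (t:ℂ) * (d:ℂ) := by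
    have : ((ωj:ℕ):ℤ) - ((ωi:ℕ):ℤ) = t * d := by
      rw [hi, hj]; push_cast; ring
    exact_mod_cast this
  have hNC : (N:ℂ) = (m:ℂ) * (d:ℂ) := by exact_mod_cast hNmd
  have key : ∀ l : Fin m, (starRingEnd ℂ) (idftCol N m ωi l) * idftCol N m ωj l
      = (1/(m:ℂ)) * Complex.exp (2*Real.pi*Complex.I*t/m)^(l:ℕ) := by
    intro l
    simp only [idftCol]
    rw [map_mul, ← Complex.exp_conj]
    have hconj : (starRingEnd ℂ) (2*(Real.pi:ℂ)*Complex.I*((l:ℕ):ℂ)*((ωi:ℕ):ℂ)/(N:ℂ))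
        = -(2*(Real.pi:ℂ)*Complex.I*((l:ℕ):ℂ)*((ωi:ℕ):ℂ)/(N:ℂ)) := by
      simp [map_div₀, map_mul, Complex.conj_I, Complex.conj_ofReal, map_ofNat]
      ring
    rw [hconj, Complex.conj_ofReal]
    have hsqrt : ((1/Real.sqrt m : ℝ):ℂ) * ((1/Real.sqrt m : ℝ):ℂ) = 1/(m:ℂ) := by
      rw [← Complex.ofReal_mul]
      have : (1/Real.sqrt m) * (1/Real.sqrt m) = 1/(m:ℝ) := by
        rw [div_mul_div_comm, Real.mul_self_sqrt (Nat.cast_nonneg m), one_mul]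
      rw [this]; push_cast; ring
    have hexp : -(2*(Real.pi:ℂ)*Complex.I*((l:ℕ):ℂ)*((ωi:ℕ):ℂ)/(N:ℂ))
        + 2*(Real.pi:ℂ)*Complex.I*((l:ℕ):ℂ)*((ωj:ℕ):ℂ)/(N:ℂ)
        = ((l:ℕ):ℂ) * (2*Real.pi*Complex.I*t/m) := by
      have h1 : -(2*(Real.pi:ℂ)*Complex.I*((l:ℕ):ℂ)*((ωi:ℕ):ℂ)/(N:ℂ))
          + 2*(Real.pi:ℂ)*Complex.I*((l:ℕ):ℂ)*((ωj:ℕ):ℂ)/(N:ℂ)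
          = 2*(Real.pi:ℂ)*Complex.I*((l:ℕ):ℂ)*(((ωj:ℕ):ℂ) - ((ωi:ℕ):ℂ))/(N:ℂ) := by
        ring
      rw [h1, hdiffC, hNC]
      field_simp
    calc ((1/Real.sqrt m : ℝ):ℂ) * Complex.exp (-(2*(Real.pi:ℂ)*Complex.I*((l:ℕ):ℂ)*((ωi:ℕ):ℂ)/(N:ℂ)))
        * (((1/Real.sqrt m : ℝ):ℂ) * Complex.exp (2*(Real.pi:ℂ)*Complex.I*((l:ℕ):ℂ)*((ωj:ℕ):ℂ)/(N:ℂ)))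
        = (((1/Real.sqrt m : ℝ):ℂ) * ((1/Real.sqrt m : ℝ):ℂ))
          * Complex.exp (-(2*(Real.pi:ℂ)*Complex.I*((l:ℕ):ℂ)*((ωi:ℕ):ℂ)/(N:ℂ))
            + 2*(Real.pi:ℂ)*Complex.I*((l:ℕ):ℂ)*((ωj:ℕ):ℂ)/(N:ℂ)) := by
          rw [Complex.exp_add]; ring
      _ = (1/(m:ℂ)) * Complex.exp (((l:ℕ):ℂ) * (2*Real.pi*Complex.I*t/m)) := by
          rw [hsqrt, hexp]
      _ = (1/(m:ℂ)) * Complex.exp (2*Real.pi*Complex.I*t/m)^(l:ℕ) := by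
          rw [← Complex.exp_nat_mul]
  have hinner : (inner ℂ (idftCol N m ωi) (idftCol N m ωj) : ℂ)
      = (1/(m:ℂ)) * ∑ l ∈ Finset.range m, Complex.exp (2*Real.pi*Complex.I*t/m)^l := by
    rw [PiLp.inner_apply]
    simp only [RCLike.inner_apply]
    rw [Finset.mul_sum]
    rw [← Fin.sum_univ_eq_sum_range (fun l => (1/(m:ℂ)) * Complex.exp (2*Real.pi*Complex.I*t/m)^l)]
    exact Finset.sum_congr rfl (fun l _ => (mul_comm _ _).trans (key l))
  rw [hinner]
  by_cases hc : ci = cj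
  · subst hc
    simp only [hts, sub_self, if_pos rfl]
    norm_num
    exact inv_mul_cancel₀ hm0
  · rw [if_neg hc]
    have ht : ¬ ((m:ℤ) ∣ t) := by
      intro hdv
      have ht0 : t ≠ 0 := by
        simp only [hts, sub_ne_zero]
        intro h
        exact hc (Fin.ext (by exact_mod_cast h.symm))
      have habs : (m:ℤ) ≤ |t| := Int.le_of_dvd (abs_pos.mpr ht0) ((dvd_abs _ _).mpr hdv)
      have h1 : |t| < m := by
        rw [hts, abs_sub_lt_iff]
        constructor <;> [skip; skip] <;>
          · have := ci.isLt; have := cj.isLt; omega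
      omega
    rw [sum_exp_ne m hm t ht]
    simp

/-- deterministic success of the second CAST decoding iteration:
with `m ∣ N`, `Γ = {ω₀ + cN/m : c = 0,…,m−1}`, support `Ω ⊆ Γ` of size `k`,
`ỹ = Σ_{ω∈Ω} x_ω a_ω + ṽ`, and `min_{ω∈Ω}|x_ω| > 2‖ṽ‖₂`, every correlation on the support
strictly dominates every correlation off the support (within `Γ`); consequently, the set of
`k` indices of `Γ` with the largest values of `|⟨a_ω, ỹ⟩|` is exactly `Ω`. -/
theorem cast_second_iteration_success (N m k : ℕ) (hN : 0 < N) (hm : 0 < m)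
    (hdvd : m ∣ N)
    (ω₀ : ℕ) (hω₀ : ω₀ < N / m)
    (g : Fin m → Fin N) (hg : ∀ c : Fin m, (g c : ℕ) = ω₀ + (c : ℕ) * (N / m))
    (Ω : Finset (Fin N)) (hΩsub : Ω ⊆ Finset.image g Finset.univ) (hk : Ω.card = k)
    (x : Fin N → ℂ) (v y : EuclideanSpace ℂ (Fin m))
    (hy : y = (∑ ω ∈ Ω, x ω • idftCol N m ω) + v)
    (hmin : ∀ ω ∈ Ω, 2 * ‖v‖ < ‖x ω‖) :
    (∀ ωi ∈ Ω, ∀ ωj ∈ Finset.image g Finset.univ \ Ω,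
        ‖(inner ℂ (idftCol N m ωj) y : ℂ)‖ < ‖(inner ℂ (idftCol N m ωi) y : ℂ)‖) ∧
      (∀ S ⊆ Finset.image g Finset.univ, S.card = k →
        (∀ ωi ∈ S, ∀ ωj ∈ Finset.image g Finset.univ \ S,
          ‖(inner ℂ (idftCol N m ωj) y : ℂ)‖ ≤ ‖(inner ℂ (idftCol N m ωi) y : ℂ)‖) →
        S = Ω) := by

  set Γ : Finset (Fin N) := Finset.image g Finset.univ with hΓ
  have hdpos : 0 < N / m := Nat.div_pos (Nat.le_of_dvd hN hdvd) hm
  -- orthonormality on Γ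
  have horth : ∀ ωa ∈ Γ, ∀ ωb ∈ Γ,
      (inner ℂ (idftCol N m ωa) (idftCol N m ωb) : ℂ) = if ωa = ωb then 1 else 0 := by
    intro ωa ha ωb hb
    obtain ⟨ca, -, hca⟩ := Finset.mem_image.mp ha
    obtain ⟨cb, -, hcb⟩ := Finset.mem_image.mp hb
    have h1 := inner_idft_s8 N m hN hm hdvd ω₀ ωa ωb ca cb (by rw [← hca]; exact hg ca)
      (by rw [← hcb]; exact hg cb)
    rw [h1]
    have hiff : ca = cb ↔ ωa = ωb := by
      constructor
      · intro h; rw [← hca, ← hcb, h]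
      · intro h
        have h2 : (ωa : ℕ) = (ωb : ℕ) := by rw [h]
        rw [← hca, ← hcb, hg ca, hg cb] at h2
        have : (ca : ℕ) = (cb : ℕ) := by
          have := hdpos
          exact Nat.eq_of_mul_eq_mul_right hdpos (by omega)
        exact Fin.ext this
    by_cases h : ca = cb
    · rw [if_pos h, if_pos (hiff.mp h)]
    · rw [if_neg h, if_neg (fun hh => h (hiff.mpr hh))]
  -- columns have norm 1
  have hnorm1 : ∀ ω ∈ Γ, ‖idftCol N m ω‖ = 1 := by
    intro ω hω
    have h1 := horth ω hω ω hω
    rw [if_pos rfl] at h1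
    have h3 : ‖idftCol N m ω‖^2 = 1 := by
      have h2 := inner_self_eq_norm_sq_to_K (𝕜 := ℂ) (idftCol N m ω)
      rw [h1] at h2
      have h4 : (RCLike.ofReal (‖idftCol N m ω‖^2) : ℂ) = RCLike.ofReal (1:ℝ) := by
        rw [RCLike.ofReal_pow, ← h2, RCLike.ofReal_one]
      exact RCLike.ofReal_injective h4
    nlinarith [norm_nonneg (idftCol N m ω)]
  -- correlation formula
  have hcorr : ∀ ω ∈ Γ, (inner ℂ (idftCol N m ω) y : ℂ)
      = (if ω ∈ Ω then x ω else 0) + (inner ℂ (idftCol N m ω) v : ℂ) := by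
    intro ω hω
    rw [hy, inner_add_right, inner_sum]
    congr 1
    have : ∀ ω' ∈ Ω, (inner ℂ (idftCol N m ω) (x ω' • idftCol N m ω') : ℂ)
        = if ω = ω' then x ω' else 0 := by
      intro ω' hω'
      rw [inner_smul_right, horth ω hω ω' (hΩsub hω')]
      by_cases h : ω = ω' <;> simp [h]
    rw [Finset.sum_congr rfl this, Finset.sum_ite_eq]
  -- off-support bound
  have hoff : ∀ ω ∈ Γ, ω ∉ Ω → ‖(inner ℂ (idftCol N m ω) y : ℂ)‖ ≤ ‖v‖ := by
    intro ω hω hno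
    rw [hcorr ω hω, if_neg hno, zero_add]
    calc ‖(inner ℂ (idftCol N m ω) v : ℂ)‖ ≤ ‖idftCol N m ω‖ * ‖v‖ := norm_inner_le_norm _ _
      _ = ‖v‖ := by rw [hnorm1 ω hω, one_mul]
  -- on-support bound
  have hon : ∀ ω ∈ Ω, ‖v‖ < ‖(inner ℂ (idftCol N m ω) y : ℂ)‖ := by
    intro ω hω
    have hωΓ : ω ∈ Γ := hΩsub hω
    rw [hcorr ω hωΓ, if_pos hω]
    have hv : ‖(inner ℂ (idftCol N m ω) v : ℂ)‖ ≤ ‖v‖ := by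
      calc ‖(inner ℂ (idftCol N m ω) v : ℂ)‖ ≤ ‖idftCol N m ω‖ * ‖v‖ := norm_inner_le_norm _ _
        _ = ‖v‖ := by rw [hnorm1 ω hωΓ, one_mul]
    have htri : ‖x ω‖ ≤ ‖x ω + (inner ℂ (idftCol N m ω) v : ℂ)‖
        + ‖(inner ℂ (idftCol N m ω) v : ℂ)‖ := by
      calc ‖x ω‖ = ‖(x ω + (inner ℂ (idftCol N m ω) v : ℂ)) - (inner ℂ (idftCol N m ω) v : ℂ)‖ := by
            ring_nf
        _ ≤ _ := norm_sub_le _ _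
    have := hmin ω hω
    linarith
  have part1 : ∀ ωi ∈ Ω, ∀ ωj ∈ Γ \ Ω,
      ‖(inner ℂ (idftCol N m ωj) y : ℂ)‖ < ‖(inner ℂ (idftCol N m ωi) y : ℂ)‖ := by
    intro ωi hi ωj hj
    obtain ⟨hjΓ, hjΩ⟩ := Finset.mem_sdiff.mp hj
    exact lt_of_le_of_lt (hoff ωj hjΓ hjΩ) (hon ωi hi)
  refine ⟨part1, ?_⟩
  intro S hS hSk hdom
  have hcards : S.card = Ω.card := by rw [hSk, hk]
  have hsub : Ω ⊆ S := by
    intro a ha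
    by_contra haS
    have hnsub : ¬ S ⊆ Ω := by
      intro hsub'
      have : S = Ω := Finset.eq_of_subset_of_card_le hsub' (le_of_eq hcards.symm)
      exact haS (this ▸ ha)
    obtain ⟨b, hbS, hbΩ⟩ := Finset.not_subset.mp hnsub
    have hb1 : ‖(inner ℂ (idftCol N m b) y : ℂ)‖ ≤ ‖v‖ := hoff b (hS hbS) hbΩ
    have ha1 : ‖v‖ < ‖(inner ℂ (idftCol N m a) y : ℂ)‖ := hon a ha
    have hd := hdom b hbS a (Finset.mem_sdiff.mpr ⟨hΩsub ha, haS⟩)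
    linarith
  exact (Finset.eq_of_subset_of_card_le hsub (le_of_eq hcards)).symm
end
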